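/- Suppose φ is ρ-weakly convex, satisfies the global KL property with exponent 1/2 (φ(x) − φ* ≤ κ·dist²(0, ∂φ(x) + N_X(x)) for all x ∈ X, κ > 0), and the Moreau envelope satisfies ‖∇φ_λ(x)‖ = (1/λ)‖x − Prox_{λ,φ}(x)‖ with λ·dist(0, ∂φ(Prox_{λ,φ}(x)) + N_X(Prox_{λ,φ}(x))) ≤ ‖x − Prox_{λ,φ}(x)‖. Then φ_λ(x) − φ* ≤ (κ + λ/2)‖∇φ_λ(x)‖² for all x ∈ X. -/

import Mathlib

open scoped RealInnerProductSpace

abbrev E (d : ℕ) := EuclideanSpace ℝ (Fin d)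

/-- the global KL property of φ with exponent 1/2 implies the global
KL inequality of the Moreau envelope φ_λ. -/
theorem gKL_transfer_to_envelope {d : ℕ} (ρ lam κ : ℝ) (hρ : 0 < ρ) (hlam : 0 < lam)
    (hlamρ : lam < 1 / ρ) (hκ : 0 < κ)
    (X : Set (E d)) (hXcl : IsClosed X) (hXcv : Convex ℝ X) (hXne : X.Nonempty)
    (φ : E d → ℝ)
    (hw : ConvexOn ℝ X (fun z => φ z + ρ / 2 * ‖z‖ ^ 2))
    (p : E d → E d) (hpX : ∀ x, p x ∈ X)
    (hpmin : ∀ x : E d, ∀ y ∈ X,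
      φ (p x) + ‖p x - x‖ ^ 2 / (2 * lam) ≤ φ y + ‖y - x‖ ^ 2 / (2 * lam))
    (φl : E d → ℝ)
    (hφl : ∀ x : E d, φl x = φ (p x) + ‖p x - x‖ ^ 2 / (2 * lam))
    (xstar : E d) (hxstarX : xstar ∈ X) (hxstarmin : ∀ y ∈ X, φ xstar ≤ φ y)
    -- S x = ∂φ(x) + N_X(x)
    (S : E d → Set (E d))
    (hS : ∀ x : E d, S x = {w : E d | ∃ v n : E d,
      (∀ y ∈ X, φ y ≥ φ x + ⟪v, y - x⟫ - ρ / 2 * ‖x - y‖ ^ 2) ∧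
      (∀ x' ∈ X, ⟪n, x' - x⟫ ≤ 0) ∧ w = v + n})
    (hKL : ∀ x ∈ X, φ x - φ xstar ≤ κ * (Metric.infDist 0 (S x)) ^ 2)
    (G : E d → E d)
    (hGnorm : ∀ x : E d, ‖G x‖ = lam⁻¹ * ‖x - p x‖)
    (hproxdist : ∀ x : E d, lam * Metric.infDist 0 (S (p x)) ≤ ‖x - p x‖) :
    ∀ x ∈ X, φl x - φ xstar ≤ (κ + lam / 2) * ‖G x‖ ^ 2 := by
  intro x _
  have hd0 : (0:ℝ) ≤ Metric.infDist 0 (S (p x)) := Metric.infDist_nonneg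
  have h1 : φ (p x) - φ xstar ≤ κ * (Metric.infDist 0 (S (p x))) ^ 2 :=
    hKL (p x) (hpX x)
  have h2 : Metric.infDist 0 (S (p x)) ≤ lam⁻¹ * ‖x - p x‖ := by
    have := hproxdist x
    rw [mul_comm] at this
    calc Metric.infDist 0 (S (p x))
        = lam⁻¹ * (Metric.infDist 0 (S (p x)) * lam) := by
          field_simp
      _ ≤ lam⁻¹ * ‖x - p x‖ := by
          apply mul_le_mul_of_nonneg_left this (by positivity)
  have h3 : (Metric.infDist 0 (S (p x))) ^ 2 ≤ (lam⁻¹ * ‖x - p x‖) ^ 2 :=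
    pow_le_pow_left₀ hd0 h2 2
  have hGn : ‖G x‖ ^ 2 = lam⁻¹ ^ 2 * ‖x - p x‖ ^ 2 := by
    rw [hGnorm x]; ring
  have hnorm : ‖p x - x‖ = ‖x - p x‖ := norm_sub_rev _ _
  rw [hφl x, hGn, hnorm]
  have hlam' : lam ≠ 0 := ne_of_gt hlam
  have hc : lam * lam⁻¹ = 1 := mul_inv_cancel₀ hlam'
  have h4 : κ * Metric.infDist 0 (S (p x)) ^ 2 ≤ κ * ((lam⁻¹ * ‖x - p x‖) ^ 2) :=
    mul_le_mul_of_nonneg_left h3 hκ.le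
  have hdiv : ‖x - p x‖ ^ 2 / (2 * lam) = lam / 2 * (lam⁻¹ ^ 2 * ‖x - p x‖ ^ 2) := by
    field_simp
  calc φ (p x) + ‖x - p x‖ ^ 2 / (2 * lam) - φ xstar
      ≤ κ * ((lam⁻¹ * ‖x - p x‖) ^ 2) + ‖x - p x‖ ^ 2 / (2 * lam) := by linarith
    _ = (κ + lam / 2) * (lam⁻¹ ^ 2 * ‖x - p x‖ ^ 2) := by rw [hdiv]; ring
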